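/- For E ⊂ [m], define ∂_E = ∏_{j∈E} ∂_j, the composition of the commuting partial difference operators ∂_j. Then the kernel of ∂_E equals Σ_{F ⊄⊇ E} N_F, that is, the span of all incremental subspaces N_F over subsets F of [m] that do not contain E. -/

import Mathlib

open Finset

namespace Hier

variable {m : ℕ}

abbrev Cell (I : Fin m → ℕ) := ∀ j, Fin (I j)

variable (I : Fin m → ℕ)

/-- standard inner product on ℚ^I -/
def dot (x y : Cell I → ℚ) : ℚ := ∑ i, x i * y i

/-- L_E: tables depending only on the coordinates in E -/
def LL (E : Finset (Fin m)) : Submodule ℚ (Cell I → ℚ) where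
  carrier := {x | ∀ i i' : Cell I, (∀ j ∈ E, i j = i' j) → x i = x i'}
  zero_mem' := by intro i i' _; rfl
  add_mem' := by
    intro a b ha hb i i' h
    simp only [Pi.add_apply, ha i i' h, hb i i' h]
  smul_mem' := by
    intro c a ha i i' h
    simp only [Pi.smul_apply, ha i i' h]

/-- orthogonal complement w.r.t. the standard inner product -/
def perp (S : Submodule ℚ (Cell I → ℚ)) : Submodule ℚ (Cell I → ℚ) where
  carrier := {y | ∀ x ∈ S, dot I x y = 0}
  zero_mem' := by intro x hx; simp [dot]
  add_mem' := by
    intro a b ha hb x hx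
    have h1 := ha x hx
    have h2 := hb x hx
    simp only [dot, Pi.add_apply, mul_add, Finset.sum_add_distrib] at *
    rw [h1, h2]; ring
  smul_mem' := by
    intro c a ha x hx
    have h1 := ha x hx
    simp only [dot, Pi.smul_apply, smul_eq_mul] at *
    calc ∑ i, x i * (c * a i) = c * ∑ i, x i * a i := by
          rw [Finset.mul_sum]; congr 1; funext i; ring
      _ = 0 := by rw [h1]; ring

/-- incremental subspace N_E -/
def NN (E : Finset (Fin m)) : Submodule ℚ (Cell I → ℚ) :=
  LL I E ⊓ perp I (⨆ j ∈ E, LL I (E.erase j))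

/-- F-marginal of x evaluated at the marginal cell i_F -/
def marg (x : Cell I → ℚ) (F : Finset (Fin m)) (i : Cell I) : ℚ :=
  ∑ j : Cell I, if ∀ k ∈ F, j k = i k then x j else 0

/-- kernel of the configuration determined by a family of facets:
tables all of whose F-marginals vanish, F ∈ Fs -/
def kern (Fs : Finset (Finset (Fin m))) : Submodule ℚ (Cell I → ℚ) where
  carrier := {y | ∀ F ∈ Fs, ∀ i, marg I y F i = 0}
  zero_mem' := by intro F hF i; simp [marg]
  add_mem' := by
    intro a b ha hb F hF i
    have h1 := ha F hF i
    have h2 := hb F hF i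
    simp only [marg, Pi.add_apply] at *
    have key : (∑ j : Cell I, if ∀ k ∈ F, j k = i k then a j + b j else 0)
        = (∑ j : Cell I, if ∀ k ∈ F, j k = i k then a j else 0)
          + (∑ j : Cell I, if ∀ k ∈ F, j k = i k then b j else 0) := by
      rw [← Finset.sum_add_distrib]
      apply Finset.sum_congr rfl
      intro j _
      split <;> simp
    rw [key, h1, h2]; ring
  smul_mem' := by
    intro c a ha F hF i
    have h1 := ha F hF i
    simp only [marg, Pi.smul_apply, smul_eq_mul] at *
    calc ∑ j : Cell I, (if ∀ k ∈ F, j k = i k then c * a j else 0)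
        = c * ∑ j : Cell I, (if ∀ k ∈ F, j k = i k then a j else 0) := by
          rw [Finset.mul_sum]; congr 1; funext j; split <;> simp
      _ = 0 := by rw [h1]; ring

/-- a (finite) abstract simplicial complex on [m] -/
def IsComplex (Δ : Finset (Finset (Fin m))) : Prop :=
  ∀ F ∈ Δ, ∀ F' ⊆ F, F' ∈ Δ

/-- the maximal elements (facets) of Δ -/
def facets (Δ : Finset (Finset (Fin m))) : Finset (Finset (Fin m)) :=
  Δ.filter (fun D => ∀ F ∈ Δ, D ⊆ F → F = D)

/-- row space of the hierarchical-model configuration A_Δ -/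
def rowsp (Δ : Finset (Finset (Fin m))) : Submodule ℚ (Cell I → ℚ) :=
  ⨆ D ∈ facets Δ, LL I D

/-- single partial difference operator ∂_j -/
def pd1 (hI : ∀ j, 0 < I j) (j : Fin m) (x : Cell I → ℚ) : Cell I → ℚ :=
  fun i => x i - x (Function.update i j ⟨0, hI j⟩)

/-- ∂_E: composition of the (commuting) ∂_j, j ∈ E -/
noncomputable def pdE (hI : ∀ j, 0 < I j) (E : Finset (Fin m)) : (Cell I → ℚ) → (Cell I → ℚ) :=
  E.toList.foldr (fun j f => pd1 I hI j ∘ f) id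


section Aux

variable {I}

lemma LL_mono {E F : Finset (Fin m)} (h : E ⊆ F) : LL I E ≤ LL I F :=
  fun x hx i i' hii => hx i i' (fun j hj => hii j (h hj))

variable (hI0 : ∀ j, 0 < I j)

lemma pd1_add (j : Fin m) (x y : Cell I → ℚ) :
    pd1 I hI0 j (x + y) = pd1 I hI0 j x + pd1 I hI0 j y := by
  funext i; simp only [pd1, Pi.add_apply]; ring

lemma pd1_smul (j : Fin m) (c : ℚ) (x : Cell I → ℚ) :
    pd1 I hI0 j (c • x) = c • pd1 I hI0 j x := by
  funext i; simp only [pd1, Pi.smul_apply, smul_eq_mul]; ring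

lemma pd1_zero (j : Fin m) : pd1 I hI0 j (0 : Cell I → ℚ) = 0 := by
  funext i; simp [pd1]

lemma pd1_comm (j k : Fin m) (x : Cell I → ℚ) :
    pd1 I hI0 j (pd1 I hI0 k x) = pd1 I hI0 k (pd1 I hI0 j x) := by
  rcases eq_or_ne j k with rfl | h
  · rfl
  · funext i
    simp only [pd1]
    rw [Function.update_comm h]
    ring

instance lcommPd1 : LeftCommutative (fun (j : Fin m) (f : (Cell I → ℚ) → (Cell I → ℚ)) =>
    pd1 I hI0 j ∘ f) :=
  ⟨fun a b g => by funext x; exact pd1_comm hI0 a b (g x)⟩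

lemma pdE_empty : pdE I hI0 ∅ = id := by
  simp [pdE]

lemma pdE_insert {j : Fin m} {E : Finset (Fin m)} (h : j ∉ E) :
    pdE I hI0 (insert j E) = pd1 I hI0 j ∘ pdE I hI0 E := by
  unfold pdE
  rw [(Finset.toList_insert h).foldr_eq]
  rfl

lemma pd1_pdE (E : Finset (Fin m)) (j : Fin m) (x : Cell I → ℚ) :
    pdE I hI0 E (pd1 I hI0 j x) = pd1 I hI0 j (pdE I hI0 E x) := by
  induction E using Finset.induction generalizing x with
  | empty => simp [pdE_empty]
  | insert _ _ h ih =>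
    rw [pdE_insert hI0 h]
    simp only [Function.comp_apply]
    rw [ih, pd1_comm]

lemma pdE_zero (E : Finset (Fin m)) : pdE I hI0 E (0 : Cell I → ℚ) = 0 := by
  induction E using Finset.induction with
  | empty => simp [pdE_empty]
  | insert _ _ h ih =>
    rw [pdE_insert hI0 h]
    simp only [Function.comp_apply, ih, pd1_zero]

lemma pdE_add (E : Finset (Fin m)) (x y : Cell I → ℚ) :
    pdE I hI0 E (x + y) = pdE I hI0 E x + pdE I hI0 E y := by
  induction E using Finset.induction generalizing x y with
  | empty => simp [pdE_empty]
  | insert _ _ h ih =>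
    rw [pdE_insert hI0 h]
    simp only [Function.comp_apply, ih, pd1_add]

lemma pdE_smul (E : Finset (Fin m)) (c : ℚ) (x : Cell I → ℚ) :
    pdE I hI0 E (c • x) = c • pdE I hI0 E x := by
  induction E using Finset.induction generalizing x with
  | empty => simp [pdE_empty]
  | insert _ _ h ih =>
    rw [pdE_insert hI0 h]
    simp only [Function.comp_apply, ih, pd1_smul]

lemma shift_mem_LL (j : Fin m) (x : Cell I → ℚ) :
    (fun i => x (Function.update i j ⟨0, hI0 j⟩)) ∈ LL I (univ.erase j) := by
  intro i i' h
  have hupd : Function.update i j ⟨0, hI0 j⟩ = Function.update i' j ⟨0, hI0 j⟩ := by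
    funext k
    rcases eq_or_ne k j with rfl | hk
    · simp
    · rw [Function.update_of_ne hk, Function.update_of_ne hk]
      exact h k (mem_erase.mpr ⟨hk, mem_univ k⟩)
  simp only [hupd]

lemma pd1_eq_zero_of_mem {j : Fin m} {x : Cell I → ℚ} (hx : x ∈ LL I (univ.erase j)) :
    pd1 I hI0 j x = 0 := by
  funext i
  simp only [pd1, Pi.zero_apply, sub_eq_zero]
  exact hx i (Function.update i j ⟨0, hI0 j⟩)
    (fun k hk => (Function.update_of_ne (mem_erase.mp hk).1 _ _).symm)

/-- the kernel of `∂_E` as a submodule -/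
def pdKer (E : Finset (Fin m)) : Submodule ℚ (Cell I → ℚ) where
  carrier := {x | pdE I hI0 E x = 0}
  zero_mem' := pdE_zero hI0 E
  add_mem' := by
    intro a b ha hb
    simp only [Set.mem_setOf_eq] at *
    rw [pdE_add hI0, ha, hb, add_zero]
  smul_mem' := by
    intro c a ha
    simp only [Set.mem_setOf_eq] at *
    rw [pdE_smul hI0, ha, smul_zero]

lemma pdE_ker (E : Finset (Fin m)) (x : Cell I → ℚ) :
    pdE I hI0 E x = 0 ↔ x ∈ (⨆ j ∈ E, LL I (univ.erase j)) := by
  constructor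
  · induction E using Finset.induction generalizing x with
    | empty =>
      intro h
      rw [pdE_empty] at h
      simp only [id_eq] at h
      subst h
      exact Submodule.zero_mem _
    | @insert j E hj ih =>
      intro h
      rw [pdE_insert hI0 hj] at h
      simp only [Function.comp_apply] at h
      rw [← pd1_pdE] at h
      have h1 := ih _ h
      have hle : (⨆ k ∈ E, LL I (univ.erase k)) ≤ ⨆ k ∈ insert j E, LL I (univ.erase k) :=
        iSup₂_le fun k hk => le_iSup₂_of_le k (mem_insert_of_mem hk) le_rfl
      have h2 : (fun i => x (Function.update i j ⟨0, hI0 j⟩))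
          ∈ ⨆ k ∈ insert j E, LL I (univ.erase k) :=
        Submodule.mem_iSup_of_mem j
          (Submodule.mem_iSup_of_mem (mem_insert_self j E) (shift_mem_LL hI0 j x))
      have hx : x = (fun i => x (Function.update i j ⟨0, hI0 j⟩)) + pd1 I hI0 j x := by
        funext i; simp [pd1]
      rw [hx]
      exact add_mem h2 (hle h1)
  · intro hx
    have hle : (⨆ j ∈ E, LL I (univ.erase j)) ≤ pdKer hI0 E := by
      refine iSup₂_le fun j hj y hy => ?_
      show pdE I hI0 E y = 0
      have hz : pd1 I hI0 j y = 0 := pd1_eq_zero_of_mem hI0 hy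
      calc pdE I hI0 E y = pdE I hI0 (insert j (E.erase j)) y := by
            rw [Finset.insert_erase hj]
        _ = pd1 I hI0 j (pdE I hI0 (E.erase j) y) := by
            rw [pdE_insert hI0 (notMem_erase j E)]; rfl
        _ = pdE I hI0 (E.erase j) (pd1 I hI0 j y) := (pd1_pdE hI0 _ j y).symm
        _ = 0 := by rw [hz, pdE_zero]
    exact hle hx

/-- the dot product as a bilinear form -/
noncomputable def dotB : LinearMap.BilinForm ℚ (Cell I → ℚ) :=
  LinearMap.mk₂ ℚ (dot I)
    (fun x x' y => by
      simp only [dot, Pi.add_apply, add_mul]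
      exact Finset.sum_add_distrib)
    (fun c x y => by
      simp only [dot, Pi.smul_apply, smul_eq_mul, Finset.mul_sum, mul_assoc])
    (fun x y y' => by
      simp only [dot, Pi.add_apply, mul_add]
      exact Finset.sum_add_distrib)
    (fun c x y => by
      simp only [dot, Pi.smul_apply, smul_eq_mul, Finset.mul_sum]
      congr 1; funext i; ring)

lemma dotB_apply (x y : Cell I → ℚ) : dotB (I := I) x y = dot I x y := rfl

lemma dot_self_eq_zero {x : Cell I → ℚ} (h : dot I x x = 0) : x = 0 := by
  have hnn : ∀ i ∈ Finset.univ (α := Cell I), 0 ≤ x i * x i := fun i _ => mul_self_nonneg _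
  have := (Finset.sum_eq_zero_iff_of_nonneg hnn).mp h
  funext i
  exact mul_self_eq_zero.mp (this i (mem_univ i))

lemma perp_eq_orthogonal (S : Submodule ℚ (Cell I → ℚ)) :
    perp I S = (dotB (I := I)).orthogonal S := by
  ext y
  constructor
  · intro hy n hn
    exact hy n hn
  · intro hy x hx
    exact hy x hx

lemma exists_proj (S : Submodule ℚ (Cell I → ℚ)) (x : Cell I → ℚ) :
    ∃ s ∈ S, x - s ∈ perp I S := by
  have hrefl : (dotB (I := I)).IsRefl := by
    intro a b h
    have : dot I a b = dot I b a := by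
      simp only [dot]; congr 1; funext i; ring
    rwa [dotB_apply, ← this]
  have hnd : ((dotB (I := I)).restrict S).Nondegenerate := by
    constructor
    all_goals
      rintro ⟨v, hv⟩ h
      have := h ⟨v, hv⟩
      simp only [LinearMap.BilinForm.restrict_apply, LinearMap.domRestrict_apply] at this
      exact Subtype.ext (dot_self_eq_zero this)
  have hc := LinearMap.BilinForm.isCompl_orthogonal_of_restrict_nondegenerate hrefl hnd
  have hx : x ∈ S ⊔ (dotB (I := I)).orthogonal S := by
    rw [hc.sup_eq_top]; trivial
  obtain ⟨s, hs, t, ht, rfl⟩ := Submodule.mem_sup.mp hx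
  refine ⟨s, hs, ?_⟩
  rw [perp_eq_orthogonal]
  simpa using ht

lemma LL_decomp (G : Finset (Fin m)) : LL I G = ⨆ F ∈ G.powerset, NN I F := by
  induction G using Finset.strongInduction with
  | _ G ih =>
    apply le_antisymm
    · intro x hx
      obtain ⟨s, hs, ht⟩ := exists_proj (⨆ j ∈ G, LL I (G.erase j)) x
      have hSle : (⨆ j ∈ G, LL I (G.erase j)) ≤ LL I G :=
        iSup₂_le fun j _ => LL_mono (erase_subset j G)
      have hxs : x - s ∈ NN I G := Submodule.mem_inf.mpr ⟨sub_mem hx (hSle hs), ht⟩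
      have h1 : x - s ∈ ⨆ F ∈ G.powerset, NN I F :=
        Submodule.mem_iSup_of_mem G
          (Submodule.mem_iSup_of_mem (mem_powerset_self G) hxs)
      have h2 : s ∈ ⨆ F ∈ G.powerset, NN I F := by
        have hle : (⨆ j ∈ G, LL I (G.erase j)) ≤ ⨆ F ∈ G.powerset, NN I F := by
          refine iSup₂_le fun j hj => ?_
          rw [ih (G.erase j) (erase_ssubset hj)]
          refine iSup₂_le fun F hF => le_iSup₂_of_le F ?_ le_rfl
          exact mem_powerset.mpr ((mem_powerset.mp hF).trans (erase_subset j G))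
        exact hle hs
      have := add_mem h1 h2
      rwa [sub_add_cancel] at this
    · exact iSup₂_le fun F hF => le_trans inf_le_left (LL_mono (mem_powerset.mp hF))

end Aux


/-- Proposition 3: `ker ∂_E = Σ_{F ⊉ E} N_F`. -/
theorem stmt11 (hI : ∀ j, 2 ≤ I j) (hI0 : ∀ j, 0 < I j) (E : Finset (Fin m)) :
    {x : Cell I → ℚ | pdE I hI0 E x = 0}
      = ((⨆ (F : Finset (Fin m)) (_ : ¬ E ⊆ F), NN I F : Submodule ℚ (Cell I → ℚ)) :
          Set (Cell I → ℚ)) := by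
  have key : (⨆ j ∈ E, LL I (univ.erase j))
      = (⨆ (F : Finset (Fin m)) (_ : ¬ E ⊆ F), NN I F : Submodule ℚ (Cell I → ℚ)) := by
    apply le_antisymm
    · refine iSup₂_le fun j hj => ?_
      rw [LL_decomp]
      refine iSup₂_le fun F hF => le_iSup₂_of_le F ?_ le_rfl
      intro hEF
      exact (mem_erase.mp ((mem_powerset.mp hF) (hEF hj))).1 rfl
    · refine iSup₂_le fun F hF => ?_
      obtain ⟨j, hjE, hjF⟩ := Finset.not_subset.mp hF
      refine le_iSup₂_of_le j hjE (le_trans inf_le_left (LL_mono ?_))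
      intro k hk
      exact mem_erase.mpr ⟨fun h => hjF (h ▸ hk), mem_univ k⟩
  ext x
  simp only [Set.mem_setOf_eq, SetLike.mem_coe]
  rw [pdE_ker hI0, key]


end Hier
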